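/- Let T : B₁* → ℂ be holomorphic on the punctured unit disk B₁* = B₁ \ {0} and suppose |T| is integrable on B_r for every 0 < r < 1. Then T has at 0 a pole of order at most one; in particular the function z ↦ z·T(z) extends holomorphically to all of B₁. -/

import Mathlib

open MeasureTheory Metric Real Set Filter Complex Topology

lemma circleMean {T : ℂ → ℂ} {c : ℂ} {t : ℝ} (ht : 0 < t)
    (hd : DifferentiableOn ℂ T (closedBall c t)) :
    2 * π * ‖T c‖ ≤ ∫ θ in (0:ℝ)..(2*π), ‖T (circleMap c t θ)‖ := by
  have h1 : (∮ z in C(c, t), (z - c)⁻¹ • T z) = (2 * ↑π * I : ℂ) • T c :=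
    hd.circleIntegral_sub_inv_smul (mem_ball_self ht)
  have h2 : ‖(2 * ↑π * I : ℂ) • T c‖ = 2 * π * ‖T c‖ := by
    rw [norm_smul]
    simp [Complex.norm_real, abs_of_pos pi_pos]
  calc 2 * π * ‖T c‖ = ‖∮ z in C(c, t), (z - c)⁻¹ • T z‖ := by rw [h1, h2]
    _ ≤ ∫ θ in (0:ℝ)..(2*π), ‖deriv (circleMap c t) θ • (circleMap c t θ - c)⁻¹ • T (circleMap c t θ)‖ := by
        rw [circleIntegral]
        exact intervalIntegral.norm_integral_le_integral_norm (by positivity)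
    _ = ∫ θ in (0:ℝ)..(2*π), ‖T (circleMap c t θ)‖ := by
        apply intervalIntegral.integral_congr
        intro θ _
        simp only
        rw [norm_smul, norm_smul, deriv_circleMap, circleMap_sub_center]
        have h3 : ‖circleMap 0 t θ * I‖ = t := by
          simp [norm_circleMap_zero, abs_of_pos ht]
        have h4 : ‖(circleMap 0 t θ)⁻¹‖ = t⁻¹ := by
          simp [norm_circleMap_zero, abs_of_pos ht]
        rw [h3, h4]
        field_simp

lemma submean {T : ℂ → ℂ} {c : ℂ} {s : ℝ} (hs : 0 < s)
    (hd : DifferentiableOn ℂ T (closedBall c s)) :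
    π * s^2 * ‖T c‖ ≤ ∫ w in ball c s, ‖T w‖ := by
  set A : Set (ℝ × ℝ) := Ioo (0:ℝ) s ×ˢ Ioo (-π) π with hA
  have hAm : MeasurableSet A := measurableSet_Ioo.prod measurableSet_Ioo
  set g : ℝ × ℝ → ℝ := fun p => p.1 * ‖T (c + Complex.polarCoord.symm p)‖ with hg
  -- continuity of g on the compact closure
  have hTc : ContinuousOn (fun w => ‖T w‖) (closedBall c s) := hd.continuousOn.norm
  have hmap : MapsTo (fun p : ℝ × ℝ => c + Complex.polarCoord.symm p)
      (Icc (0:ℝ) s ×ˢ Icc (-π) π) (closedBall c s) := by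
    intro p hp
    simp only [mem_closedBall, Complex.dist_eq, add_sub_cancel_left]
    rw [Complex.norm_polarCoord_symm]
    rw [_root_.abs_of_nonneg hp.1.1]
    exact hp.1.2
  have hsymm : Continuous (fun p : ℝ × ℝ => c + Complex.polarCoord.symm p) := by
    have : (fun p : ℝ × ℝ => c + Complex.polarCoord.symm p)
        = fun p : ℝ × ℝ => c + p.1 * (Real.cos p.2 + Real.sin p.2 * Complex.I) := by
      funext p; rw [Complex.polarCoord_symm_apply]
    rw [this]; fun_prop
  have hgc : ContinuousOn g (Icc (0:ℝ) s ×ˢ Icc (-π) π) := by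
    apply ContinuousOn.mul (continuous_fst.continuousOn)
    exact hTc.comp hsymm.continuousOn hmap
  have hgint : IntegrableOn g A := by
    apply (hgc.integrableOn_compact (isCompact_Icc.prod isCompact_Icc)).mono_set
    exact Set.prod_mono Ioo_subset_Icc_self Ioo_subset_Icc_self
  -- step 1: translate
  have e1 : ∫ w in ball c s, ‖T w‖
      = ∫ v, Set.indicator (ball (0:ℂ) s) (fun v => ‖T (c+v)‖) v := by
    rw [← integral_indicator measurableSet_ball]
    rw [← integral_add_left_eq_self c (f := fun w => Set.indicator (ball c s) (fun w => ‖T w‖) w)]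
    congr 1; funext v
    by_cases hv : v ∈ ball (0:ℂ) s
    · rw [Set.indicator_of_mem (by simpa [mem_ball, dist_eq_norm] using hv),
        Set.indicator_of_mem hv]
    · rw [Set.indicator_of_notMem (by simpa [mem_ball, dist_eq_norm] using hv),
        Set.indicator_of_notMem hv]
  -- step 2: polar coordinates
  have e2 : ∫ v, Set.indicator (ball (0:ℂ) s) (fun v => ‖T (c+v)‖) v
      = ∫ p in polarCoord.target, p.1 • Set.indicator (ball (0:ℂ) s) (fun v => ‖T (c+v)‖)
          (Complex.polarCoord.symm p) :=
    (Complex.integral_comp_polarCoord_symm _).symm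
  -- step 3: restrict domain
  have e3 : ∫ p in polarCoord.target, p.1 • Set.indicator (ball (0:ℂ) s) (fun v => ‖T (c+v)‖)
          (Complex.polarCoord.symm p) = ∫ p in A, g p := by
    have key : ∀ p ∈ polarCoord.target,
        p.1 • Set.indicator (ball (0:ℂ) s) (fun v => ‖T (c+v)‖) (Complex.polarCoord.symm p)
        = A.indicator g p := by
      intro p hp
      rw [polarCoord_target] at hp
      have hp1 : 0 < p.1 := hp.1
      have habs : ‖Complex.polarCoord.symm p‖ = p.1 := by
        rw [Complex.norm_polarCoord_symm, abs_of_pos hp1]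
      by_cases h : p.1 < s
      · rw [Set.indicator_of_mem (by rw [mem_ball_zero_iff, habs]; exact h),
          Set.indicator_of_mem (by exact ⟨⟨hp1, h⟩, hp.2⟩)]
        rfl
      · rw [Set.indicator_of_notMem
            (by rw [mem_ball_zero_iff, habs]; exact h),
          Set.indicator_of_notMem (by intro hmem; exact h hmem.1.2)]
        simp
    rw [setIntegral_congr_fun polarCoord.open_target.measurableSet key,
      setIntegral_indicator hAm]
    congr 1
    rw [polarCoord_target, hA, Set.prod_inter_prod,
      Set.inter_eq_right.mpr Ioo_subset_Ioi_self, Set.inter_self]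
  -- step 4: Fubini
  have e4 : ∫ p in A, g p = ∫ t in Ioo (0:ℝ) s, ∫ θ in Ioo (-π) π, g (t, θ) := by
    rw [hA, Measure.volume_eq_prod] at *
    exact setIntegral_prod g hgint
  -- inner circle-mean bound
  have hmean : ∀ t ∈ Ioo (0:ℝ) s, 2*π*‖T c‖*t ≤ ∫ θ in Ioo (-π) π, g (t, θ) := by
    intro t ht
    have h1 : (fun θ : ℝ => g (t, θ)) = fun θ => t * ‖T (circleMap c t θ)‖ := by
      funext θ
      have : c + Complex.polarCoord.symm (t, θ) = circleMap c t θ := by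
        rw [Complex.polarCoord_symm_apply]
        simp only [circleMap]
        rw [Complex.exp_mul_I]
        push_cast
        ring
      simp only [hg, this]
    have h2 : ∫ θ in Ioo (-π) π, g (t, θ)
        = t * ∫ θ in (0:ℝ)..(2*π), ‖T (circleMap c t θ)‖ := by
      rw [h1, integral_const_mul]
      congr 1
      rw [← MeasureTheory.integral_Ioc_eq_integral_Ioo,
        ← intervalIntegral.integral_of_le (by linarith [pi_pos] : -π ≤ π)]
      have hper : Function.Periodic (fun θ : ℝ => ‖T (circleMap c t θ)‖) (2*π) :=
        (periodic_circleMap c t).comp fun z => ‖T z‖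
      have := hper.intervalIntegral_add_eq (-π) 0
      rw [zero_add] at this
      rw [show -π + 2*π = π by ring] at this
      exact this
    rw [h2]
    have h3 := circleMean ht.1 (hd.mono (closedBall_subset_closedBall ht.2.le))
    calc 2*π*‖T c‖*t = t * (2*π*‖T c‖) := by ring
      _ ≤ t * ∫ θ in (0:ℝ)..(2*π), ‖T (circleMap c t θ)‖ :=
          mul_le_mul_of_nonneg_left h3 ht.1.le
  -- integrability of the inner integral
  have hΦ : IntegrableOn (fun t => ∫ θ in Ioo (-π) π, g (t, θ)) (Ioo (0:ℝ) s) := by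
    have h := hgint
    rw [hA, IntegrableOn, Measure.volume_eq_prod, ← Measure.prod_restrict] at h
    exact h.integral_prod_left
  -- assemble
  have e5 : ∫ t in Ioo (0:ℝ) s, 2*π*‖T c‖*t = π * s^2 * ‖T c‖ := by
    rw [← MeasureTheory.integral_Ioc_eq_integral_Ioo,
      ← intervalIntegral.integral_of_le hs.le,
      intervalIntegral.integral_const_mul, integral_id]
    ring
  rw [e1, e2, e3, e4, ← e5]
  apply setIntegral_mono_on ?_ hΦ measurableSet_Ioo hmean
  exact ((continuous_const.mul continuous_id).integrableOn_Icc (a := 0) (b := s)).mono_set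
    Ioo_subset_Icc_self

-- key pointwise bound
lemma keybound {T : ℂ → ℂ}
    (hT : DifferentiableOn ℂ T (ball (0 : ℂ) 1 \ {0}))
    (hint : ∀ r : ℝ, 0 < r → r < 1 → IntegrableOn T (ball (0 : ℂ) r \ {0}) volume)
    {z : ℂ} (hz0 : z ≠ 0) (hz : ‖z‖ < 1/2) :
    π/4 * (‖z‖^2 * ‖T z‖) ≤ ∫ w in ball (0:ℂ) (2*‖z‖) \ {0}, ‖T w‖ := by
  have hzpos : 0 < ‖z‖ := norm_pos_iff.mpr hz0
  have hsub : closedBall z (‖z‖/2) ⊆ ball (0:ℂ) (2*‖z‖) \ {0} := by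
    intro w hw
    rw [mem_closedBall, dist_eq_norm] at hw
    have hlow : ‖z‖/2 ≤ ‖w‖ := by
      have := norm_sub_norm_le z w
      rw [norm_sub_rev] at this
      linarith
    constructor
    · rw [mem_ball_zero_iff]
      calc ‖w‖ = ‖z + (w - z)‖ := by ring_nf
        _ ≤ ‖z‖ + ‖w - z‖ := norm_add_le _ _
        _ ≤ ‖z‖ + ‖z‖/2 := by linarith
        _ < 2*‖z‖ := by linarith
    · simp only [mem_singleton_iff]
      intro h; rw [h, norm_zero] at hlow; linarith
  have hsub2 : ball (0:ℂ) (2*‖z‖) \ {0} ⊆ ball (0:ℂ) 1 \ {0} :=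
    diff_subset_diff_left (ball_subset_ball (by linarith))
  have hd : DifferentiableOn ℂ T (closedBall z (‖z‖/2)) :=
    hT.mono (hsub.trans hsub2)
  have h1 := submean (by linarith : (0:ℝ) < ‖z‖/2) hd
  have h2 : ∫ w in ball z (‖z‖/2), ‖T w‖ ≤ ∫ w in ball (0:ℂ) (2*‖z‖) \ {0}, ‖T w‖ := by
    apply setIntegral_mono_set
    · exact (hint (2*‖z‖) (by linarith) (by linarith)).norm
    · filter_upwards with w using norm_nonneg _
    · exact HasSubset.Subset.eventuallyLE (ball_subset_closedBall.trans hsub)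
  calc π/4 * (‖z‖^2 * ‖T z‖) = π * (‖z‖/2)^2 * ‖T z‖ := by ring
    _ ≤ ∫ w in ball z (‖z‖/2), ‖T w‖ := h1
    _ ≤ _ := h2

theorem integrable_holomorphic_has_pole_order_at_most_one
    (T : ℂ → ℂ)
    (hT : DifferentiableOn ℂ T (ball (0 : ℂ) 1 \ {0}))
    (hint : ∀ r : ℝ, 0 < r → r < 1 → IntegrableOn T (ball (0 : ℂ) r \ {0}) volume) :
    ∃ g : ℂ → ℂ, DifferentiableOn ℂ g (ball (0 : ℂ) 1) ∧
      ∀ z ∈ ball (0 : ℂ) 1 \ {0}, g z = z * T z := by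
  set h : ℂ → ℂ := fun z => z^2 * T z with hh
  have hball : ball (0:ℂ) 1 ∈ 𝓝 (0:ℂ) := ball_mem_nhds _ one_pos
  have hd : DifferentiableOn ℂ h (ball (0:ℂ) 1 \ {0}) :=
    (differentiableOn_id.pow 2).mul hT
  set C : ℝ := ∫ w in ball (0:ℂ) (3/4) \ {0}, ‖T w‖ with hC
  have hCint : IntegrableOn (fun w => ‖T w‖) (ball (0:ℂ) (3/4) \ {0}) :=
    (hint (3/4) (by norm_num) (by norm_num)).norm
  have hC0 : 0 ≤ C := setIntegral_nonneg (measurableSet_ball.diff (measurableSet_singleton _))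
    fun w _ => norm_nonneg _
  -- bound by C for small z
  have hbd : ∀ z : ℂ, z ≠ 0 → ‖z‖ < 3/8 → π/4 * (‖z‖^2 * ‖T z‖) ≤ C := by
    intro z hz0 hz
    refine (keybound hT hint hz0 (by linarith)).trans ?_
    apply setIntegral_mono_set hCint
    · filter_upwards with w using norm_nonneg _
    · exact HasSubset.Subset.eventuallyLE
        (diff_subset_diff_left (ball_subset_ball (by linarith)))
  -- little-o
  have ho : (fun z => h z - h 0) =o[𝓝[≠] (0:ℂ)] fun z => (z - 0)⁻¹ := by
    rw [Asymptotics.isLittleO_iff]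
    intro ε hε
    set δ : ℝ := min (3/8) (ε * π / (4 * (C+1))) with hδ
    have hδpos : 0 < δ := by
      apply lt_min (by norm_num)
      have := pi_pos
      positivity
    have h1 : ∀ᶠ z in 𝓝[≠] (0:ℂ), ‖z‖ < δ :=
      eventually_nhdsWithin_of_eventually_nhds
        (eventually_of_mem (ball_mem_nhds _ hδpos) fun z hz => mem_ball_zero_iff.mp hz)
    have h2 : ∀ᶠ z in 𝓝[≠] (0:ℂ), z ≠ 0 :=
      eventually_mem_nhdsWithin.mono fun z hz => hz
    filter_upwards [h1, h2] with z hzδ hz0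
    have hznorm : 0 < ‖z‖ := norm_pos_iff.mpr hz0
    have hzlt : ‖z‖ < 3/8 := lt_of_lt_of_le hzδ (min_le_left _ _)
    have hb := hbd z hz0 hzlt
    have key : ‖z‖^2 * ‖T z‖ ≤ 4*(C+1)/π := by
      rw [le_div_iff₀ pi_pos]
      nlinarith [pi_pos]
    have key2 : ‖z‖^2 * ‖T z‖ ≤ ε / δ := by
      refine key.trans ?_
      have hδ2 : δ ≤ ε * π / (4 * (C+1)) := min_le_right _ _
      rw [div_le_div_iff₀ (by positivity) hδpos]
      rw [le_div_iff₀ (by positivity)] at hδ2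
      nlinarith [pi_pos]
    rw [hh]
    simp only [sub_zero]
    rw [show ((0:ℂ)^2 * T 0) = 0 by ring, sub_zero, norm_mul, norm_pow, norm_inv]
    calc ‖z‖^2 * ‖T z‖ ≤ ε / ‖z‖ := key2.trans (div_le_div_of_nonneg_left hε.le hznorm hzδ.le)
      _ = ε * ‖z‖⁻¹ := by rw [div_eq_mul_inv]
  -- extend h over 0
  set L : ℂ := limUnder (𝓝[≠] (0:ℂ)) h with hL
  set H : ℂ → ℂ := Function.update h 0 L with hH
  have HD : DifferentiableOn ℂ H (ball (0:ℂ) 1) :=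
    Complex.differentiableOn_update_limUnder_of_isLittleO hball hd ho
  -- show H 0 = 0 using a sequence
  have hcont : ContinuousAt H 0 :=
    (HD.differentiableAt (isOpen_ball.mem_nhds (mem_ball_self one_pos))).continuousAt
  set u : ℕ → ℝ := fun n => ((n:ℝ)+3)⁻¹ with hu
  have hupos : ∀ n, 0 < u n := fun n => by positivity
  have hult : ∀ n, u n < 3/8 := by
    intro n
    rw [hu]
    rw [inv_lt_iff_one_lt_mul₀ (by positivity)]
    have h0n : (0:ℝ) ≤ (n:ℝ) := Nat.cast_nonneg n
    nlinarith
  set zseq : ℕ → ℂ := fun n => ((u n : ℝ) : ℂ) with hzseq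
  have hzn0 : ∀ n, zseq n ≠ 0 := fun n => by
    simp [hzseq, Complex.ofReal_ne_zero, (hupos n).ne']
  have hznorm : ∀ n, ‖zseq n‖ = u n := fun n => by
    simp [hzseq, Complex.norm_real, abs_of_pos (hupos n)]
  have hutend : Tendsto u atTop (𝓝 0) := by
    apply tendsto_inv_atTop_zero.comp
    exact tendsto_atTop_add_const_right _ _ tendsto_natCast_atTop_atTop
  have hztendnhds : Tendsto zseq atTop (𝓝 0) := by
    have := (Complex.continuous_ofReal.tendsto 0).comp hutend
    simpa [hzseq, Function.comp_def] using this
  have hHseq : Tendsto (fun n => H (zseq n)) atTop (𝓝 (H 0)) :=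
    hcont.tendsto.comp hztendnhds
  -- the shrinking integrals
  set S : ℕ → Set ℂ := fun n => ball (0:ℂ) (2 * u n) \ {0} with hS
  have hSm : ∀ n, MeasurableSet (S n) :=
    fun n => measurableSet_ball.diff (measurableSet_singleton _)
  have hSanti : Antitone S := by
    intro m n hmn
    apply diff_subset_diff_left
    apply ball_subset_ball
    have : u n ≤ u m := by
      rw [hu]
      apply inv_anti₀ (by positivity)
      have : (m:ℝ) ≤ (n:ℝ) := Nat.cast_le.mpr hmn
      linarith
    linarith
  have hSint : IntegrableOn (fun w => ‖T w‖) (S 0) := by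
    apply hCint.mono_set
    apply diff_subset_diff_left
    apply ball_subset_ball
    rw [hu]; norm_num
  have hSempty : ⋂ n, S n = ∅ := by
    ext w
    simp only [mem_iInter, mem_empty_iff_false, iff_false, not_forall]
    by_cases hw : w = 0
    · exact ⟨0, fun hmem => hmem.2 (by simp [hw])⟩
    · have hwpos : 0 < ‖w‖ := norm_pos_iff.mpr hw
      obtain ⟨n, hn⟩ := exists_nat_gt (2 / ‖w‖)
      refine ⟨n, fun hmem => ?_⟩
      have h1 : ‖w‖ < 2 * u n := mem_ball_zero_iff.mp hmem.1
      have h2 : 2 / ‖w‖ < (n:ℝ) + 3 := by linarith [(Nat.cast_nonneg n : (0:ℝ) ≤ (n:ℝ))]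
      rw [div_lt_iff₀ hwpos] at h2
      have hv : (0:ℝ) < (n:ℝ) + 3 := by positivity
      have huv : u n * ((n:ℝ)+3) = 1 := by rw [hu]; field_simp
      nlinarith
  have hρ : Tendsto (fun n => ∫ w in S n, ‖T w‖) atTop (𝓝 0) := by
    have := tendsto_setIntegral_of_antitone hSm hSanti ⟨0, hSint⟩
    rwa [hSempty, Measure.restrict_empty, integral_zero_measure] at this
  have hbound : ∀ n, ‖H (zseq n)‖ ≤ 4/π * ∫ w in S n, ‖T w‖ := by
    intro n
    have hk := keybound hT hint (hzn0 n) (by rw [hznorm n]; linarith [hult n])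
    rw [hznorm n] at hk
    have hHz : H (zseq n) = h (zseq n) := Function.update_of_ne (hzn0 n) _ _
    rw [hHz, hh]
    have : ‖zseq n ^ 2 * T (zseq n)‖ = ‖zseq n‖^2 * ‖T (zseq n)‖ := by
      rw [norm_mul, norm_pow]
    rw [this, hznorm n]
    calc u n^2 * ‖T (zseq n)‖ = 4/π * (π/4 * (u n^2 * ‖T (zseq n)‖)) := by
          field_simp
        _ ≤ 4/π * ∫ w in S n, ‖T w‖ := by
          apply mul_le_mul_of_nonneg_left hk
          positivity
  have hH0 : H 0 = 0 := by
    have hnorm : Tendsto (fun n => ‖H (zseq n)‖) atTop (𝓝 ‖H 0‖) := hHseq.norm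
    have hrhs : Tendsto (fun n => 4/π * ∫ w in S n, ‖T w‖) atTop (𝓝 0) := by
      have := hρ.const_mul (4/π)
      simpa using this
    have := le_of_tendsto_of_tendsto' hnorm hrhs hbound
    exact norm_le_zero_iff.mp this
  -- conclude with dslope
  refine ⟨dslope H 0, (Complex.differentiableOn_dslope hball).mpr HD, ?_⟩
  intro z hz
  have hz0 : z ≠ 0 := by
    intro hzz; exact hz.2 (by simp [hzz])
  rw [dslope_of_ne _ hz0, slope_def_field, hH0]
  have hHz : H z = h z := Function.update_of_ne hz0 _ _
  rw [hHz, hh]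
  field_simp
  ring
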